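/- Let y : [0,∞) → ℝ be a continuous function with y(0) ≥ 0. Define x(t) = y(t) - min(0, inf_{0≤s≤t} y(s)) and k(t) = -min(0, inf_{0≤s≤t} y(s)). Then (x, k) solves the one-dimensional Skorokhod problem for y: x(t) = y(t) + k(t) ≥ 0 for all t, k(0) = 0, k is nondecreasing, and k increases only at times t when x(t) = 0. -/

import Mathlib

open Set

/-- The explicit solution of the one-dimensional Skorokhod problem. -/
theorem skorokhod_one_dim (y x k : ℝ → ℝ) (hy : Continuous y) (hy0 : 0 ≤ y 0)
    (hx : ∀ t, x t = y t - min 0 (sInf (y '' Set.Icc 0 t)))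
    (hk : ∀ t, k t = - min 0 (sInf (y '' Set.Icc 0 t))) :
    (∀ t, 0 ≤ t → x t = y t + k t ∧ 0 ≤ x t) ∧
    k 0 = 0 ∧
    MonotoneOn k (Set.Ici (0 : ℝ)) ∧
    (∀ a b : ℝ, 0 ≤ a → a ≤ b → (∀ t ∈ Set.Icc a b, 0 < x t) → k b = k a) := by
  set m : ℝ → ℝ := fun t => sInf (y '' Set.Icc 0 t) with hm
  have hcomp : ∀ t : ℝ, IsCompact (y '' Set.Icc 0 t) := fun t => isCompact_Icc.image hy
  have hbdd : ∀ t : ℝ, BddBelow (y '' Set.Icc 0 t) := fun t => (hcomp t).bddBelow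
  have hne : ∀ t : ℝ, 0 ≤ t → (y '' Set.Icc 0 t).Nonempty := fun t ht =>
    ⟨y 0, mem_image_of_mem _ ⟨le_refl 0, ht⟩⟩
  have hle : ∀ t : ℝ, 0 ≤ t → m t ≤ y t := fun t ht =>
    csInf_le (hbdd t) (mem_image_of_mem _ ⟨ht, le_refl t⟩)
  have hmono : ∀ a b : ℝ, 0 ≤ a → a ≤ b → m b ≤ m a := fun a b ha hab =>
    csInf_le_csInf (hbdd b) (hne a ha) (image_mono (Icc_subset_Icc_right hab))
  have hmem : ∀ t : ℝ, 0 ≤ t → m t ∈ y '' Set.Icc 0 t := fun t ht =>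
    (hcomp t).sInf_mem (hne t ht)
  refine ⟨?_, ?_, ?_, ?_⟩
  · intro t ht
    refine ⟨by rw [hx, hk]; ring, ?_⟩
    rw [hx]
    rcases le_or_gt 0 (m t) with h | h
    · rw [min_eq_left h]
      have := hle t ht
      linarith
    · rw [min_eq_right h.le]
      have := hle t ht
      linarith
  · rw [hk]
    have h0 : (y '' Set.Icc (0:ℝ) 0) = {y 0} := by
      rw [Set.Icc_self, Set.image_singleton]
    have : m 0 = y 0 := by rw [hm]; simp [h0]
    rw [show sInf (y '' Set.Icc (0:ℝ) 0) = m 0 from rfl, this, min_eq_left hy0, neg_zero]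
  · intro a ha b hb hab
    rw [hk, hk]
    have := hmono a b ha hab
    have : min 0 (m b) ≤ min 0 (m a) := min_le_min le_rfl this
    linarith
  · intro a b ha hab hpos
    rw [hk, hk]
    have hmba : m b ≤ m a := hmono a b ha hab
    rcases eq_or_lt_of_le hmba with heq | hlt
    · rw [show sInf (y '' Set.Icc 0 b) = m b from rfl,
        show sInf (y '' Set.Icc 0 a) = m a from rfl, heq]
    · rcases lt_or_ge 0 (m b) with hb0 | hb0
      · -- both infima positive, both mins are 0
        rw [show sInf (y '' Set.Icc 0 b) = m b from rfl,
          show sInf (y '' Set.Icc 0 a) = m a from rfl,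
          min_eq_left hb0.le, min_eq_left (by linarith : (0:ℝ) ≤ m a)]
      · exfalso
        obtain ⟨s, hs, hys⟩ := hmem b (ha.trans hab)
        have hsa : a < s := by
          by_contra hsle
          push_neg at hsle
          have : m a ≤ y s := csInf_le (hbdd a) (mem_image_of_mem _ ⟨hs.1, hsle⟩)
          rw [hys] at this
          exact absurd this (not_le.mpr hlt)
        have hxs := hpos s ⟨hsa.le, hs.2⟩
        rw [hx] at hxs
        have h1 : m b ≤ m s := hmono s b (ha.trans hsa.le) hs.2
        have h2 : m s ≤ y s := csInf_le (hbdd s) (mem_image_of_mem _ ⟨hs.1, le_refl s⟩)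
        rw [hys] at h2
        have hms : m s = m b := le_antisymm h2 h1
        rw [show sInf (y '' Set.Icc 0 s) = m s from rfl, hms, hys, min_eq_right hb0] at hxs
        linarith
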